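/- Let u₁, u₂, v₁, v₂ ∈ ℂ with u₁−u₂, v₁−u₂, u₁−v₂, v₁−v₂ ∉ ℤ_{≤0}. Then the two factorization orders of the sl(2) R-operator coincide: D₂[u₁−u₂, v₁−u₂] ∘ D₁[u₁−v₂, u₁−u₂] = D₁[v₁−v₂, v₁−u₂] ∘ D₂[u₁−v₂, v₁−v₂] as ℂ-linear endomorphisms of ℂ[z₁,z₂], where D₂[α,β](z₁ʲ(z₂−z₁)ᵏ) = (Γ(k+α)/Γ(k+β)) z₁ʲ(z₂−z₁)ᵏ and D₁[α,β](z₂ʲ(z₁−z₂)ᵏ) = (Γ(k+α)/Γ(k+β)) z₂ʲ(z₁−z₂)ᵏ. -/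

import Mathlib

open MvPolynomial

section Aux

open Finset

private lemma diff_split_aux (r : ℕ → ℂ) (s : ℕ) :
    ∑ i ∈ range (s+2), (-1:ℂ)^i * ((s+1).choose i) * r i
    = ∑ i ∈ range (s+1), (-1:ℂ)^i * (s.choose i) * r i
      - ∑ i ∈ range (s+1), (-1:ℂ)^i * (s.choose i) * r (i+1) := by
  rw [Finset.sum_range_succ' (fun i => (-1:ℂ)^i * ((s+1).choose i) * r i) (s+1),
      Finset.sum_range_succ' (fun i => (-1:ℂ)^i * (s.choose i) * r i) s]
  have h1 : ∀ i, ((s+1).choose (i+1) : ℂ) = (s.choose i : ℂ) + (s.choose (i+1) : ℂ) := by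
    intro i; rw [Nat.choose_succ_succ]; push_cast; ring
  have h2 : ∑ i ∈ range (s+1), (-1:ℂ)^(i+1) * ((s+1).choose (i+1)) * r (i+1)
      = ∑ i ∈ range (s+1), ((-1:ℂ)^(i+1) * (s.choose i) * r (i+1)
          + (-1:ℂ)^(i+1) * (s.choose (i+1)) * r (i+1)) := by
    refine Finset.sum_congr rfl fun i _ => ?_
    rw [h1]; ring
  rw [h2, Finset.sum_add_distrib]
  have h3 : ∑ i ∈ range (s+1), (-1:ℂ)^(i+1) * (s.choose (i+1)) * r (i+1)
      = ∑ i ∈ range s, (-1:ℂ)^(i+1) * (s.choose (i+1)) * r (i+1) := by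
    rw [Finset.sum_range_succ, Nat.choose_succ_self]; simp
  have h4 : ∑ i ∈ range (s+1), (-1:ℂ)^(i+1) * (s.choose i) * r (i+1)
      = - ∑ i ∈ range (s+1), (-1:ℂ)^i * (s.choose i) * r (i+1) := by
    rw [← Finset.sum_neg_distrib]
    refine Finset.sum_congr rfl fun i _ => ?_
    ring
  rw [h3, h4]
  simp only [Nat.choose_zero_right, Nat.cast_one]
  ring

private lemma gamma_shift_ne (a : ℂ) (ha : ∀ m : ℕ, a ≠ -(m:ℂ)) (i : ℕ) :
    ∀ m : ℕ, a + i ≠ -(m:ℂ) := by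
  intro m h
  apply ha (m + i)
  push_cast
  linear_combination h

/-- Finite-difference form of the Chu–Vandermonde identity for Gamma ratios. -/
private lemma vandermonde_gamma (s : ℕ) : ∀ a c : ℂ,
    (∀ m : ℕ, a ≠ -(m:ℂ)) → (∀ m : ℕ, c ≠ -(m:ℂ)) →
    ∑ i ∈ range (s+1), (-1:ℂ)^i * (s.choose i) * (Complex.Gamma (c+i) / Complex.Gamma (a+i))
    = (∏ t ∈ range s, (a - c + t)) * Complex.Gamma c / Complex.Gamma (a + s) := by
  induction s with
  | zero => intro a c _ _; simp
  | succ s ih =>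
    intro a c ha hc
    have ha1 : ∀ m : ℕ, a + 1 ≠ -(m:ℂ) := by
      intro m h; exact gamma_shift_ne a ha 1 m (by push_cast at h ⊢; linear_combination h)
    have hc1 : ∀ m : ℕ, c + 1 ≠ -(m:ℂ) := by
      intro m h; exact gamma_shift_ne c hc 1 m (by push_cast at h ⊢; linear_combination h)
    have key := diff_split_aux (fun i => Complex.Gamma (c+i) / Complex.Gamma (a+i)) s
    have shift : ∑ i ∈ range (s+1),
        (-1:ℂ)^i * (s.choose i) * (Complex.Gamma (c+(i+1:ℕ)) / Complex.Gamma (a+(i+1:ℕ)))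
        = ∑ i ∈ range (s+1),
        (-1:ℂ)^i * (s.choose i) * (Complex.Gamma ((c+1)+i) / Complex.Gamma ((a+1)+i)) := by
      refine Finset.sum_congr rfl fun i _ => ?_
      have e1 : c + ((i:ℕ)+1:ℕ) = (c+1) + (i:ℂ) := by push_cast; ring
      have e2 : a + ((i:ℕ)+1:ℕ) = (a+1) + (i:ℂ) := by push_cast; ring
      rw [e1, e2]
    rw [shift] at key
    rw [ih (a+1) (c+1) ha1 hc1, ih a c ha hc] at key
    have hprod : ∏ t ∈ range s, (a + 1 - (c + 1) + (t:ℂ)) = ∏ t ∈ range s, (a - c + (t:ℂ)) := by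
      refine Finset.prod_congr rfl fun t _ => ?_; ring
    rw [hprod] at key
    have hc0 : c ≠ 0 := by simpa using hc 0
    have hGc1 : Complex.Gamma (c+1) = c * Complex.Gamma c := Complex.Gamma_add_one c hc0
    have has : a + (s:ℂ) ≠ 0 := by simpa using gamma_shift_ne a ha s 0
    have hGa1 : Complex.Gamma (a + 1 + s) = (a + s) * Complex.Gamma (a + s) := by
      have : a + 1 + (s:ℂ) = (a + s) + 1 := by ring
      rw [this, Complex.Gamma_add_one _ has]
    have hGas : Complex.Gamma (a + s) ≠ 0 :=
      Complex.Gamma_ne_zero fun m => gamma_shift_ne a ha s m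
    rw [hGc1, hGa1] at key
    have harg : a + ((s:ℕ)+1:ℕ) = (a + s) + 1 := by push_cast; ring
    rw [key, harg, Complex.Gamma_add_one _ has, Finset.prod_range_succ]
    field_simp
    ring

/-- Reindexing a triangular double sum by total degree. -/
private lemma triangle_reindex {M : Type*} [AddCommMonoid M] (j : ℕ) (f : ℕ → ℕ → M) :
    ∑ i ∈ range (j+1), ∑ t ∈ range (j-i+1), f i t
    = ∑ s ∈ range (j+1), ∑ i ∈ range (s+1), f i (s-i) := by
  rw [Finset.sum_sigma', Finset.sum_sigma']
  refine Finset.sum_nbij' (fun x => (⟨x.1 + x.2, x.1⟩ : (_ : ℕ) × ℕ))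
    (fun x => (⟨x.2, x.1 - x.2⟩ : (_ : ℕ) × ℕ)) ?_ ?_ ?_ ?_ ?_ <;>
    rintro ⟨a, b⟩ hx <;>
    simp only [Finset.mem_sigma, Finset.mem_range] at hx <;>
    dsimp only
  · simp only [Finset.mem_sigma, Finset.mem_range]; omega
  · simp only [Finset.mem_sigma, Finset.mem_range]; omega
  · rw [Nat.add_sub_cancel_left]
  · have h : b + (a - b) = a := by omega
    rw [h]
  · congr 1; omega

private noncomputable abbrev pP (j k : ℕ) : MvPolynomial (Fin 2) ℂ := (X 0)^j * (X 1 - X 0)^k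
private noncomputable abbrev qP (j k : ℕ) : MvPolynomial (Fin 2) ℂ := (X 1)^j * (X 0 - X 1)^k

private lemma expand_pq (j k : ℕ) :
    pP j k = ∑ i ∈ range (j+1), ((-1:ℂ)^k * (j.choose i : ℂ)) • qP (j-i) (k+i) := by
  have h0 : (X 0 : MvPolynomial (Fin 2) ℂ) = (X 0 - X 1) + X 1 := by ring
  rw [pP, h0, add_pow, Finset.sum_mul]
  refine Finset.sum_congr rfl fun i hi => ?_
  rw [qP, smul_eq_C_mul, map_mul, map_pow, map_neg, map_one, map_natCast]
  have hne : (X 1 - (X 0 - X 1 + X 1) : MvPolynomial (Fin 2) ℂ) = -(X 0 - X 1) := by ring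
  rw [hne, neg_pow, pow_add]
  ring

private lemma expand_qp (j k : ℕ) :
    qP j k = ∑ i ∈ range (j+1), ((-1:ℂ)^k * (j.choose i : ℂ)) • pP (j-i) (k+i) := by
  have h0 : (X 1 : MvPolynomial (Fin 2) ℂ) = (X 1 - X 0) + X 0 := by ring
  rw [qP, h0, add_pow, Finset.sum_mul]
  refine Finset.sum_congr rfl fun i hi => ?_
  rw [pP, smul_eq_C_mul, map_mul, map_pow, map_neg, map_one, map_natCast]
  have hne : (X 0 - (X 1 - X 0 + X 0) : MvPolynomial (Fin 2) ℂ) = -(X 1 - X 0) := by ring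
  rw [hne, neg_pow, pow_add]
  ring

private lemma expand_monomial (a b : ℕ) :
    (X 0 : MvPolynomial (Fin 2) ℂ)^a * (X 1)^b
    = ∑ i ∈ range (b+1), ((b.choose i : ℂ)) • pP (a+(b-i)) i := by
  have h0 : (X 1 : MvPolynomial (Fin 2) ℂ) = (X 1 - X 0) + X 0 := by ring
  rw [h0, add_pow, Finset.mul_sum]
  refine Finset.sum_congr rfl fun i hi => ?_
  rw [pP, smul_eq_C_mul, map_natCast, pow_add]
  ring

end Aux

/-- The two factorization orders of the `sl(2)` R-operator coincide:
`D₂[u₁−u₂, v₁−u₂] ∘ D₁[u₁−v₂, u₁−u₂] = D₁[v₁−v₂, v₁−u₂] ∘ D₂[u₁−v₂, v₁−v₂]`,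
where `D₂[α,β]` acts diagonally on the basis `z₁ʲ(z₂−z₁)ᵏ` with eigenvalue
`Γ(k+α)/Γ(k+β)` and `D₁[α,β]` acts diagonally on the basis `z₂ʲ(z₁−z₂)ᵏ` with
eigenvalue `Γ(k+α)/Γ(k+β)`. -/
theorem R_factorization_orders_coincide (u₁ u₂ v₁ v₂ : ℂ)
    (h₁ : ∀ n : ℕ, u₁ - u₂ ≠ -(n : ℂ)) (h₂ : ∀ n : ℕ, v₁ - u₂ ≠ -(n : ℂ))
    (h₃ : ∀ n : ℕ, u₁ - v₂ ≠ -(n : ℂ)) (h₄ : ∀ n : ℕ, v₁ - v₂ ≠ -(n : ℂ))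
    (A B C' E : Module.End ℂ (MvPolynomial (Fin 2) ℂ))
    (hA : ∀ j k : ℕ,
      A ((X 0) ^ j * (X 1 - X 0) ^ k)
        = (Complex.Gamma ((k : ℂ) + (u₁ - u₂)) / Complex.Gamma ((k : ℂ) + (v₁ - u₂)))
            • ((X 0) ^ j * (X 1 - X 0) ^ k))
    (hB : ∀ j k : ℕ,
      B ((X 1) ^ j * (X 0 - X 1) ^ k)
        = (Complex.Gamma ((k : ℂ) + (u₁ - v₂)) / Complex.Gamma ((k : ℂ) + (u₁ - u₂)))
            • ((X 1) ^ j * (X 0 - X 1) ^ k))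
    (hC : ∀ j k : ℕ,
      C' ((X 1) ^ j * (X 0 - X 1) ^ k)
        = (Complex.Gamma ((k : ℂ) + (v₁ - v₂)) / Complex.Gamma ((k : ℂ) + (v₁ - u₂)))
            • ((X 1) ^ j * (X 0 - X 1) ^ k))
    (hE : ∀ j k : ℕ,
      E ((X 0) ^ j * (X 1 - X 0) ^ k)
        = (Complex.Gamma ((k : ℂ) + (u₁ - v₂)) / Complex.Gamma ((k : ℂ) + (v₁ - v₂)))
            • ((X 0) ^ j * (X 1 - X 0) ^ k)) :
    A * B = C' * E := by
  classical
  obtain ⟨f, hfdef⟩ : ∃ f : ℕ → ℂ,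
      f = fun k : ℕ => Complex.Gamma ((k:ℂ) + (u₁ - u₂)) / Complex.Gamma ((k:ℂ) + (v₁ - u₂)) :=
    ⟨_, rfl⟩
  obtain ⟨g, hgdef⟩ : ∃ g : ℕ → ℂ,
      g = fun k : ℕ => Complex.Gamma ((k:ℂ) + (u₁ - v₂)) / Complex.Gamma ((k:ℂ) + (u₁ - u₂)) :=
    ⟨_, rfl⟩
  obtain ⟨h, hhdef⟩ : ∃ h : ℕ → ℂ,
      h = fun k : ℕ => Complex.Gamma ((k:ℂ) + (v₁ - v₂)) / Complex.Gamma ((k:ℂ) + (v₁ - u₂)) :=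
    ⟨_, rfl⟩
  obtain ⟨e, hedef⟩ : ∃ e : ℕ → ℂ,
      e = fun k : ℕ => Complex.Gamma ((k:ℂ) + (u₁ - v₂)) / Complex.Gamma ((k:ℂ) + (v₁ - v₂)) :=
    ⟨_, rfl⟩
  have hA' : ∀ j k : ℕ, A (pP j k) = f k • pP j k := by
    intro j k; rw [hfdef]; exact hA j k
  have hB' : ∀ j k : ℕ, B (qP j k) = g k • qP j k := by
    intro j k; rw [hgdef]; exact hB j k
  have hC'' : ∀ j k : ℕ, C' (qP j k) = h k • qP j k := by
    intro j k; rw [hhdef]; exact hC j k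
  have hE' : ∀ j k : ℕ, E (pP j k) = e k • pP j k := by
    intro j k; rw [hedef]; exact hE j k
  have key : ∀ j k : ℕ, (A * B) (pP j k) = (C' * E) (pP j k) := by
    intro j k
    have lhs : (A * B) (pP j k)
        = ∑ i ∈ Finset.range (j+1), ∑ t ∈ Finset.range (j-i+1),
            ((-1:ℂ)^k * (j.choose i : ℂ) * g (k+i) * ((-1:ℂ)^(k+i)
              * ((j-i).choose t : ℂ)) * f (k+i+t))
              • pP (j-i-t) (k+i+t) := by
      rw [Module.End.mul_apply, expand_pq j k]
      simp only [map_sum, map_smul, hB']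
      simp only [expand_qp, map_sum, map_smul, hA', Finset.smul_sum, smul_smul]
      refine Finset.sum_congr rfl fun i _ => Finset.sum_congr rfl fun t _ => ?_
      congr 1
      ring
    have rhs : (C' * E) (pP j k)
        = ∑ i ∈ Finset.range (j+1), ∑ t ∈ Finset.range (j-i+1),
            ((-1:ℂ)^k * (j.choose i : ℂ) * h (k+i) * ((-1:ℂ)^(k+i)
              * ((j-i).choose t : ℂ)) * e k)
              • pP (j-i-t) (k+i+t) := by
      rw [Module.End.mul_apply, hE' j k, map_smul, expand_pq j k]
      simp only [map_sum, map_smul, hC'', Finset.smul_sum, smul_smul]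
      simp only [expand_qp, Finset.smul_sum, smul_smul]
      refine Finset.sum_congr rfl fun i _ => Finset.sum_congr rfl fun t _ => ?_
      congr 1
      ring
    rw [lhs, rhs,
      triangle_reindex j (fun i t =>
        ((-1:ℂ)^k * (j.choose i : ℂ) * g (k+i) * ((-1:ℂ)^(k+i)
          * ((j-i).choose t : ℂ)) * f (k+i+t)) • pP (j-i-t) (k+i+t)),
      triangle_reindex j (fun i t =>
        ((-1:ℂ)^k * (j.choose i : ℂ) * h (k+i) * ((-1:ℂ)^(k+i)
          * ((j-i).choose t : ℂ)) * e k) • pP (j-i-t) (k+i+t))]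
    refine Finset.sum_congr rfl fun s hs => ?_
    have hsj : s ≤ j := by simpa [Nat.lt_succ_iff] using hs
    have inner_lhs : ∀ i ∈ Finset.range (s+1),
        ((-1:ℂ)^k * (j.choose i : ℂ) * g (k+i) * ((-1:ℂ)^(k+i)
          * ((j-i).choose (s-i) : ℂ)) * f (k+i+(s-i)))
          • pP (j-i-(s-i)) (k+i+(s-i))
        = ((-1:ℂ)^i * ((j.choose s : ℂ) * (s.choose i : ℂ)) * g (k+i) * f (k+s))
          • pP (j-s) (k+s) := by
      intro i hi
      have his : i ≤ s := by simpa [Nat.lt_succ_iff] using hi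
      have e1 : j-i-(s-i) = j - s := by omega
      have e2 : k+i+(s-i) = k + s := by omega
      rw [e1, e2]
      congr 1
      have hch : (j.choose i : ℂ) * ((j-i).choose (s-i) : ℂ)
          = (j.choose s : ℂ) * (s.choose i : ℂ) := by
        rw [← Nat.cast_mul, ← Nat.cast_mul, ← Nat.choose_mul (n := j) his]
      have hsign : (-1:ℂ)^k * (-1:ℂ)^(k+i) = (-1:ℂ)^i := by
        rw [pow_add, ← mul_assoc, ← pow_add, ← two_mul, pow_mul]
        norm_num
      calc (-1:ℂ)^k * (j.choose i : ℂ) * g (k+i)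
            * ((-1:ℂ)^(k+i) * ((j-i).choose (s-i) : ℂ)) * f (k+s)
          = ((-1:ℂ)^k * (-1:ℂ)^(k+i)) * ((j.choose i : ℂ) * ((j-i).choose (s-i) : ℂ))
              * g (k+i) * f (k+s) := by ring
        _ = (-1:ℂ)^i * ((j.choose s : ℂ) * (s.choose i : ℂ)) * g (k+i) * f (k+s) := by
              rw [hch, hsign]
    have inner_rhs : ∀ i ∈ Finset.range (s+1),
        ((-1:ℂ)^k * (j.choose i : ℂ) * h (k+i) * ((-1:ℂ)^(k+i)
          * ((j-i).choose (s-i) : ℂ)) * e k)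
          • pP (j-i-(s-i)) (k+i+(s-i))
        = ((-1:ℂ)^i * ((j.choose s : ℂ) * (s.choose i : ℂ)) * h (k+i) * e k)
          • pP (j-s) (k+s) := by
      intro i hi
      have his : i ≤ s := by simpa [Nat.lt_succ_iff] using hi
      have e1 : j-i-(s-i) = j - s := by omega
      have e2 : k+i+(s-i) = k + s := by omega
      rw [e1, e2]
      congr 1
      have hch : (j.choose i : ℂ) * ((j-i).choose (s-i) : ℂ)
          = (j.choose s : ℂ) * (s.choose i : ℂ) := by
        rw [← Nat.cast_mul, ← Nat.cast_mul, ← Nat.choose_mul (n := j) his]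
      have hsign : (-1:ℂ)^k * (-1:ℂ)^(k+i) = (-1:ℂ)^i := by
        rw [pow_add, ← mul_assoc, ← pow_add, ← two_mul, pow_mul]
        norm_num
      calc (-1:ℂ)^k * (j.choose i : ℂ) * h (k+i)
            * ((-1:ℂ)^(k+i) * ((j-i).choose (s-i) : ℂ)) * e k
          = ((-1:ℂ)^k * (-1:ℂ)^(k+i)) * ((j.choose i : ℂ) * ((j-i).choose (s-i) : ℂ))
              * h (k+i) * e k := by ring
        _ = (-1:ℂ)^i * ((j.choose s : ℂ) * (s.choose i : ℂ)) * h (k+i) * e k := by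
              rw [hch, hsign]
    rw [Finset.sum_congr rfl inner_lhs, Finset.sum_congr rfl inner_rhs,
      ← Finset.sum_smul, ← Finset.sum_smul]
    congr 1
    -- the scalar identity (Chu–Vandermonde)
    have hαk : ∀ m : ℕ, (k:ℂ) + (u₁ - u₂) ≠ -(m:ℂ) := by
      intro m hm; apply h₁ (m + k); push_cast; linear_combination hm
    have hβk : ∀ m : ℕ, (k:ℂ) + (v₁ - u₂) ≠ -(m:ℂ) := by
      intro m hm; apply h₂ (m + k); push_cast; linear_combination hm
    have hγk : ∀ m : ℕ, (k:ℂ) + (u₁ - v₂) ≠ -(m:ℂ) := by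
      intro m hm; apply h₃ (m + k); push_cast; linear_combination hm
    have hδk : ∀ m : ℕ, (k:ℂ) + (v₁ - v₂) ≠ -(m:ℂ) := by
      intro m hm; apply h₄ (m + k); push_cast; linear_combination hm
    have vg := vandermonde_gamma s ((k:ℂ) + (u₁ - u₂)) ((k:ℂ) + (u₁ - v₂)) hαk hγk
    have vh := vandermonde_gamma s ((k:ℂ) + (v₁ - u₂)) ((k:ℂ) + (v₁ - v₂)) hβk hδk
    have hgarg : ∀ i : ℕ, g (k+i)
        = Complex.Gamma (((k:ℂ)+(u₁ - v₂))+i) / Complex.Gamma (((k:ℂ)+(u₁ - u₂))+i) := by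
      intro i
      have e1 : ((k+i:ℕ):ℂ) + (u₁ - v₂) = ((k:ℂ)+(u₁ - v₂))+i := by push_cast; ring
      have e2 : ((k+i:ℕ):ℂ) + (u₁ - u₂) = ((k:ℂ)+(u₁ - u₂))+i := by push_cast; ring
      rw [hgdef]; simp only []; rw [e1, e2]
    have hharg : ∀ i : ℕ, h (k+i)
        = Complex.Gamma (((k:ℂ)+(v₁ - v₂))+i) / Complex.Gamma (((k:ℂ)+(v₁ - u₂))+i) := by
      intro i
      have e1 : ((k+i:ℕ):ℂ) + (v₁ - v₂) = ((k:ℂ)+(v₁ - v₂))+i := by push_cast; ring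
      have e2 : ((k+i:ℕ):ℂ) + (v₁ - u₂) = ((k:ℂ)+(v₁ - u₂))+i := by push_cast; ring
      rw [hhdef]; simp only []; rw [e1, e2]
    have lsum : ∑ i ∈ Finset.range (s+1),
        (-1:ℂ)^i * ((j.choose s : ℂ) * (s.choose i : ℂ)) * g (k+i) * f (k+s)
        = (j.choose s : ℂ) * f (k+s)
          * ((∏ t ∈ Finset.range s, (((k:ℂ)+(u₁ - u₂)) - ((k:ℂ)+(u₁ - v₂)) + t))
              * Complex.Gamma ((k:ℂ)+(u₁ - v₂)) / Complex.Gamma (((k:ℂ)+(u₁ - u₂)) + s)) := by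
      rw [← vg, Finset.mul_sum]
      refine Finset.sum_congr rfl fun i _ => ?_
      rw [hgarg i]; ring
    have rsum : ∑ i ∈ Finset.range (s+1),
        (-1:ℂ)^i * ((j.choose s : ℂ) * (s.choose i : ℂ)) * h (k+i) * e k
        = (j.choose s : ℂ) * e k
          * ((∏ t ∈ Finset.range s, (((k:ℂ)+(v₁ - u₂)) - ((k:ℂ)+(v₁ - v₂)) + t))
              * Complex.Gamma ((k:ℂ)+(v₁ - v₂)) / Complex.Gamma (((k:ℂ)+(v₁ - u₂)) + s)) := by
      rw [← vh, Finset.mul_sum]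
      refine Finset.sum_congr rfl fun i _ => ?_
      rw [hharg i]; ring
    rw [lsum, rsum]
    have hprodeq : (∏ t ∈ Finset.range s, (((k:ℂ)+(u₁ - u₂)) - ((k:ℂ)+(u₁ - v₂)) + t))
        = ∏ t ∈ Finset.range s, (((k:ℂ)+(v₁ - u₂)) - ((k:ℂ)+(v₁ - v₂)) + t) := by
      refine Finset.prod_congr rfl fun t _ => ?_
      ring
    rw [hprodeq]
    have hfarg : f (k+s)
        = Complex.Gamma (((k:ℂ)+(u₁ - u₂))+s) / Complex.Gamma (((k:ℂ)+(v₁ - u₂))+s) := by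
      have e1 : ((k+s:ℕ):ℂ) + (u₁ - u₂) = ((k:ℂ)+(u₁ - u₂))+s := by push_cast; ring
      have e2 : ((k+s:ℕ):ℂ) + (v₁ - u₂) = ((k:ℂ)+(v₁ - u₂))+s := by push_cast; ring
      rw [hfdef]; simp only []; rw [e1, e2]
    have heval : e k = Complex.Gamma ((k:ℂ)+(u₁ - v₂)) / Complex.Gamma ((k:ℂ)+(v₁ - v₂)) := by
      rw [hedef]
    rw [hfarg, heval]
    have hGαs : Complex.Gamma (((k:ℂ)+(u₁ - u₂))+s) ≠ 0 :=
      Complex.Gamma_ne_zero fun m => gamma_shift_ne _ hαk s m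
    have hGβs : Complex.Gamma (((k:ℂ)+(v₁ - u₂))+s) ≠ 0 :=
      Complex.Gamma_ne_zero fun m => gamma_shift_ne _ hβk s m
    have hGδ : Complex.Gamma ((k:ℂ)+(v₁ - v₂)) ≠ 0 :=
      Complex.Gamma_ne_zero fun m => hδk m
    field_simp
  -- conclude by checking on the monomial basis
  refine (MvPolynomial.basisMonomials (Fin 2) ℂ).ext fun d => ?_
  have hmono : (MvPolynomial.basisMonomials (Fin 2) ℂ) d
      = (X 0 : MvPolynomial (Fin 2) ℂ)^(d 0) * (X 1)^(d 1) := by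
    have hb : (MvPolynomial.basisMonomials (Fin 2) ℂ) d = monomial d 1 :=
      congrFun (MvPolynomial.coe_basisMonomials (Fin 2) ℂ) d
    rw [hb, monomial_eq, C_1, one_mul,
      Finsupp.prod_fintype _ _ (fun i => pow_zero _), Fin.prod_univ_two]
  rw [hmono, expand_monomial (d 0) (d 1), map_sum, map_sum]
  exact Finset.sum_congr rfl fun i _ => by rw [map_smul, map_smul, key]
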